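/- Let m be an even positive integer and let f be a cyclic bent function on F_{2^{m−1}} × F_2. For a ∈ F_{2^{m−1}} define B_a = { v_{a,λ} : λ ∈ F_{2^{m−1}} } ⊂ ℂ^{2^{m−1}}, where v_{a,λ} has coordinates ( ρ₀ (−1)^{f(ax,0)} + ρ₁ (−1)^{f(ax,1)} ) (−1)^{Tr^{m−1}_1(λ x)} / √(2^{m−1}) for x ∈ F_{2^{m−1}}, with ρ₀ = (1+i)/2 and ρ₁ = (1−i)/2, and let B_∞ be the standard basis of ℂ^{2^{m−1}}. Then each B_a is an orthonormal basis of ℂ^{2^{m−1}}, and the 2^{m−1}+1 bases B_∞ and B_a (a ∈ F_{2^{m−1}}) are pairwise mutually unbiased: whenever v and v′ belong to two distinct of these bases, |⟨v, v′⟩| = 1/√(2^{m−1}). -/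

import Mathlib

open Finset

noncomputable section

abbrev Fq (n : ℕ) := GaloisField 2 n

noncomputable instance (n : ℕ) : Fintype (Fq n) := Fintype.ofFinite _

/-- Absolute trace from `F_{2^n}` to `F_2`. -/
noncomputable def tr1 (n : ℕ) (x : Fq n) : ZMod 2 :=
  Algebra.trace (ZMod 2) (Fq n) x

/-- `(-1)^x` for `x : F_2`, as an integer. -/
def chi (x : ZMod 2) : ℤ := (-1 : ℤ) ^ x.val

/-- Walsh transform of a Boolean function on `F_{2^n} × F_2`. -/
noncomputable def walsh (n : ℕ) (f : Fq n × ZMod 2 → ZMod 2)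
    (lam : Fq n) (nu : ZMod 2) : ℤ :=
  ∑ x : Fq n × ZMod 2, chi (f x + tr1 n (lam * x.1) + nu * x.2)

/-- A Boolean function on `F_{2^{m-1}} × F_2` is bent if all its Walsh coefficients
are `± 2^(m/2)`. -/
def IsBent (m : ℕ) (f : Fq (m - 1) × ZMod 2 → ZMod 2) : Prop :=
  ∀ lam nu, walsh (m - 1) f lam nu = 2 ^ (m / 2) ∨ walsh (m - 1) f lam nu = -(2 ^ (m / 2))

/-- Cyclic bent function on `F_{2^{m-1}} × F_2`. -/
def IsCyclicBent (m : ℕ) (f : Fq (m - 1) × ZMod 2 → ZMod 2) : Prop :=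
  ∀ a b : Fq (m - 1), a ≠ b → ∀ ε : ZMod 2,
    IsBent m fun x => f (a * x.1, x.2) + f (b * x.1, x.2 + ε)

noncomputable instance (n : ℕ) : DecidableEq (Fq n) := Classical.decEq _

open scoped ComplexOrder

/-- The vector `v_{a,λ}` whose `x`-th coordinate is
`(ρ₀ (-1)^{f(ax,0)} + ρ₁ (-1)^{f(ax,1)}) (-1)^{Tr(λ x)} / √(2^{m-1})`,
where `ρ₀ = (1+i)/2` and `ρ₁ = (1-i)/2`. -/
noncomputable def mubVec (m : ℕ) (f : Fq (m - 1) × ZMod 2 → ZMod 2)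
    (a lam : Fq (m - 1)) : EuclideanSpace ℂ (Fq (m - 1)) :=
  WithLp.toLp 2 fun x =>
    (((1 + Complex.I) / 2) * (-1 : ℂ) ^ (f (a * x, 0)).val
      + ((1 - Complex.I) / 2) * (-1 : ℂ) ^ (f (a * x, 1)).val)
    * (-1 : ℂ) ^ (tr1 (m - 1) (lam * x)).val / Real.sqrt (2 ^ (m - 1))

/-! ### Auxiliary material -/

namespace Stmt5Aux

/-- `(-1)^t` as a complex number. -/
noncomputable def chiC (t : ZMod 2) : ℂ := (-1 : ℂ) ^ t.val

lemma zmod2_11 : (1 + 1 : ZMod 2) = 0 := rfl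
lemma zmod2_v0 : (0 : ZMod 2).val = 0 := rfl
lemma zmod2_v1 : (1 : ZMod 2).val = 1 := rfl
lemma zmod2_cases (t : ZMod 2) : t = 0 ∨ t = 1 := by revert t; decide

lemma chiC_add (a b : ZMod 2) : chiC (a + b) = chiC a * chiC b := by
  rcases zmod2_cases a with rfl | rfl <;> rcases zmod2_cases b with rfl | rfl <;> simp [chiC, zmod2_11, zmod2_v0, zmod2_v1]

lemma chiC_zero : chiC 0 = 1 := rfl

lemma chiC_add_one (t : ZMod 2) : chiC (t + 1) = - chiC t := by
  rcases zmod2_cases t with rfl | rfl <;> simp [chiC, zmod2_11, zmod2_v0, zmod2_v1]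

lemma abs_chiC (t : ZMod 2) : ‖chiC t‖ = 1 := by
  rcases zmod2_cases t with rfl | rfl <;> simp [chiC, zmod2_v0, zmod2_v1]

lemma conj_chiC (t : ZMod 2) : (starRingEnd ℂ) (chiC t) = chiC t := by
  rcases zmod2_cases t with rfl | rfl <;> simp [chiC, zmod2_v0, zmod2_v1]

lemma chi_add_one (t : ZMod 2) : chi (t + 1) = - chi t := by revert t; decide

lemma chi_cast (t : ZMod 2) : ((chi t : ℤ) : ℂ) = chiC t := by
  simp [chi, chiC]

/-- The unimodular coefficient `ρ₀ (-1)^{e₀} + ρ₁ (-1)^{e₁}`. -/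
noncomputable def G (e0 e1 : ZMod 2) : ℂ :=
  ((1 + Complex.I) / 2) * (-1 : ℂ) ^ e0.val + ((1 - Complex.I) / 2) * (-1 : ℂ) ^ e1.val

lemma conj_G_mul_G (e0 e1 : ZMod 2) : (starRingEnd ℂ) (G e0 e1) * G e0 e1 = 1 := by
  rcases zmod2_cases e0 with rfl | rfl <;> rcases zmod2_cases e1 with rfl | rfl <;>
    (simp [G, zmod2_v0, zmod2_v1, map_add, map_mul, map_div₀, Complex.conj_I, map_ofNat];
     ring_nf; try simp [Complex.I_sq, map_ofNat]; try ring)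

lemma abs_G (e0 e1 : ZMod 2) : ‖G e0 e1‖ = 1 := by
  have h := conj_G_mul_G e0 e1
  rw [← Complex.normSq_eq_conj_mul_self] at h
  have h2 : Complex.normSq (G e0 e1) = 1 := by exact_mod_cast h
  rw [Complex.norm_def, h2, Real.sqrt_one]

lemma key_pointwise (e0 e1 d0 d1 t : ZMod 2) :
    (starRingEnd ℂ) (G e0 e1) * G d0 d1 * chiC t
      = (1/2) * (chiC (e0 + d0 + t) + chiC (e1 + d1 + t))
        + (Complex.I/2) * (chiC (e1 + d0 + t) - chiC (e0 + d1 + t)) := by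
  rcases zmod2_cases e0 with rfl | rfl <;> rcases zmod2_cases e1 with rfl | rfl <;>
    rcases zmod2_cases d0 with rfl | rfl <;> rcases zmod2_cases d1 with rfl | rfl <;>
    rcases zmod2_cases t with rfl | rfl <;>
    (simp [G, chiC, zmod2_11, zmod2_v0, zmod2_v1, map_add, map_mul, map_div₀,
       Complex.conj_I, map_ofNat];
     ring_nf; try simp [Complex.I_sq, map_ofNat]; try ring)

lemma tr1_add (n : ℕ) (x y : Fq n) : tr1 n (x + y) = tr1 n x + tr1 n y := by
  simp [tr1]

lemma tr1_zero (n : ℕ) : tr1 n (0 : Fq n) = 0 := by simp [tr1]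

lemma sum_chiC_eq_zero (n : ℕ) (c : Fq n) (hc : c ≠ 0) :
    ∑ x : Fq n, chiC (tr1 n (c * x)) = 0 := by
  obtain ⟨x0, hx0⟩ : ∃ x0, tr1 n (c * x0) ≠ 0 := by
    by_contra h
    push_neg at h
    exact hc ((traceForm_nondegenerate (ZMod 2) (Fq n)).1 c (fun y => h y))
  have hx1 : tr1 n (c * x0) = 1 := by
    have : ∀ t : ZMod 2, t ≠ 0 → t = 1 := by decide
    exact this _ hx0
  have key : ∑ x : Fq n, chiC (tr1 n (c * x)) = ∑ x : Fq n, chiC (tr1 n (c * (x + x0))) :=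
    (Fintype.sum_equiv (Equiv.addRight x0) _ _ (fun x => rfl)).symm
  have key2 : ∀ x : Fq n, chiC (tr1 n (c * (x + x0))) = - chiC (tr1 n (c * x)) := by
    intro x
    rw [mul_add, tr1_add, hx1, chiC_add_one]
  rw [Finset.sum_congr rfl (fun x _ => key2 x), Finset.sum_neg_distrib] at key
  have h2 : (2:ℂ) * ∑ x : Fq n, chiC (tr1 n (c * x)) = 0 := by
    rw [two_mul]; nth_rewrite 2 [key]; ring
  simpa using h2

lemma sum_zmod2 {M : Type*} [AddCommMonoid M] (h : ZMod 2 → M) :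
    ∑ x : ZMod 2, h x = h 0 + h 1 := by
  have : (univ : Finset (ZMod 2)) = {0, 1} := by decide
  rw [this, Finset.sum_insert (by decide), Finset.sum_singleton]

lemma card_Fq (n : ℕ) (hn : n ≠ 0) : Fintype.card (Fq n) = 2 ^ n := by
  rw [← Nat.card_eq_fintype_card]
  exact GaloisField.card 2 n hn

lemma mubVec_apply (m : ℕ) (f : Fq (m - 1) × ZMod 2 → ZMod 2) (a lam x : Fq (m-1)) :
    mubVec m f a lam x
      = G (f (a * x, 0)) (f (a * x, 1)) * chiC (tr1 (m - 1) (lam * x))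
          / (Real.sqrt (2 ^ (m - 1)) : ℝ) := rfl

lemma inner_mubVec (m : ℕ) (f : Fq (m - 1) × ZMod 2 → ZMod 2)
    (a a' lam lam' : Fq (m - 1)) :
    @inner ℂ _ _ (mubVec m f a lam) (mubVec m f a' lam')
      = (∑ x : Fq (m - 1),
          (starRingEnd ℂ) (G (f (a * x, 0)) (f (a * x, 1)))
            * G (f (a' * x, 0)) (f (a' * x, 1))
            * chiC (tr1 (m - 1) ((lam + lam') * x))) / ((2 : ℝ) ^ (m - 1) : ℝ) := by
  have hsq : (Real.sqrt ((2:ℝ) ^ (m-1)) : ℝ) * Real.sqrt ((2:ℝ) ^ (m-1)) = (2:ℝ)^(m-1) :=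
    Real.mul_self_sqrt (by positivity)
  rw [PiLp.inner_apply]
  calc ∑ x : Fq (m-1), (inner ℂ (mubVec m f a lam x) (mubVec m f a' lam' x) : ℂ)
      = ∑ x : Fq (m-1),
          ((starRingEnd ℂ) (G (f (a * x, 0)) (f (a * x, 1)))
            * G (f (a' * x, 0)) (f (a' * x, 1))
            * chiC (tr1 (m - 1) ((lam + lam') * x))) / ((2 : ℝ) ^ (m - 1) : ℝ) := by
        apply Finset.sum_congr rfl
        intro x _
        rw [mubVec_apply, mubVec_apply, RCLike.inner_apply',
          map_div₀, map_mul, conj_chiC, Complex.conj_ofReal]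
        have h3 : (lam + lam') * x = lam * x + lam' * x := by ring
        rw [h3, tr1_add, chiC_add, div_mul_div_comm, ← Complex.ofReal_mul, hsq]
        ring
    _ = _ := (Finset.sum_div _ _ _).symm

lemma walsh_split (n : ℕ) (F : Fq n × ZMod 2 → ZMod 2) (c : Fq n) (ν : ZMod 2) :
    walsh n F c ν = (∑ x : Fq n, chi (F (x, 0) + tr1 n (c * x)))
      + ∑ x : Fq n, chi (F (x, 1) + tr1 n (c * x) + ν) := by
  rw [walsh, Fintype.sum_prod_type]
  rw [Finset.sum_congr rfl
    (fun x _ => sum_zmod2 (fun t => chi (F (x, t) + tr1 n (c * x) + ν * t)))]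
  rw [Finset.sum_add_distrib]
  congr 1
  · apply Finset.sum_congr rfl; intro x _; norm_num
  · apply Finset.sum_congr rfl; intro x _; rw [mul_one]

lemma abs_coord (m : ℕ) (e0 e1 t : ZMod 2) :
    ‖G e0 e1 * chiC t / (Real.sqrt (2 ^ (m-1)) : ℝ)‖
      = 1 / Real.sqrt (2 ^ (m - 1)) := by
  rw [norm_div, norm_mul, abs_G, abs_chiC, one_mul, Complex.norm_real,
    Real.norm_of_nonneg (Real.sqrt_nonneg _)]

lemma abs_helper (m : ℕ) (hm1 : 1 ≤ m) (u w : ℤ)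
    (hu : (u : ℝ)^2 = 2^m) (hw : (w : ℝ)^2 = 2^m) :
    ‖(((u : ℤ) : ℂ) - Complex.I * ((w : ℤ) : ℂ)) / 2 / ((2 : ℝ)^(m-1) : ℝ)‖
      = 1 / Real.sqrt (2 ^ (m - 1)) := by
  have h1 : ‖((u : ℤ) : ℂ) - Complex.I * ((w : ℤ) : ℂ)‖
      = Real.sqrt ((2:ℝ)^(m+1)) := by
    have he : (((u : ℤ) : ℂ) - Complex.I * ((w : ℤ) : ℂ))
        = ((u : ℝ) : ℂ) + ((-(w : ℝ) : ℝ) : ℂ) * Complex.I := by push_cast; ring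
    rw [he, Complex.norm_def, Complex.normSq_add_mul_I]
    congr 1
    have : (-(w : ℝ))^2 = (w : ℝ)^2 := by ring
    rw [this, hu, hw]
    rw [pow_succ]
    ring
  rw [norm_div, norm_div, h1, Complex.norm_two, Complex.norm_real,
    Real.norm_of_nonneg (by positivity)]
  rw [div_div]
  rw [div_eq_div_iff (by positivity) (by positivity)]
  rw [one_mul, ← Real.sqrt_mul (by positivity)]
  have hmm : m + 1 + (m - 1) = (1 + (m - 1)) * 2 := by omega
  have he2 : (2:ℝ)^(m+1) * 2^(m-1) = (2 * 2^(m-1))^2 := by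
    calc (2:ℝ)^(m+1) * 2^(m-1) = 2^(m+1+(m-1)) := (pow_add 2 (m+1) (m-1)).symm
      _ = 2^((1+(m-1))*2) := by rw [hmm]
      _ = (2^(1+(m-1)))^2 := by rw [pow_mul]
      _ = (2*2^(m-1))^2 := by rw [pow_add, pow_one]
  rw [he2, Real.sqrt_sq (by positivity)]

end Stmt5Aux

open Stmt5Aux

theorem stmt5 (m : ℕ) (hm : Even m) (hm0 : 0 < m)
    (f : Fq (m - 1) × ZMod 2 → ZMod 2) (hf : IsCyclicBent m f) :
    (∀ a : Fq (m - 1),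
      ∃ b : OrthonormalBasis (Fq (m - 1)) ℂ (EuclideanSpace ℂ (Fq (m - 1))),
        ∀ lam, b lam = mubVec m f a lam) ∧
    (∀ a a' : Fq (m - 1), a ≠ a' → ∀ lam lam' : Fq (m - 1),
      ‖(@inner ℂ _ _ (mubVec m f a lam) (mubVec m f a' lam'))‖
        = 1 / Real.sqrt (2 ^ (m - 1))) ∧
    (∀ a lam : Fq (m - 1), ∀ y : Fq (m - 1),
      ‖
          (@inner ℂ _ _ (EuclideanSpace.single y (1 : ℂ)) (mubVec m f a lam))‖
        = 1 / Real.sqrt (2 ^ (m - 1))) := by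
  have hm2 : 2 ≤ m := by
    rcases hm with ⟨k, hk⟩; omega
  have hn0 : m - 1 ≠ 0 := by omega
  have hm1 : 1 ≤ m := hm0
  -- inner products within one family
  have hsame : ∀ a lam lam' : Fq (m - 1),
      @inner ℂ _ _ (mubVec m f a lam) (mubVec m f a lam')
        = if lam = lam' then (1 : ℂ) else 0 := by
    intro a lam lam'
    rw [inner_mubVec]
    by_cases h : lam = lam'
    · subst h
      rw [if_pos rfl]
      have hterm : ∀ x : Fq (m - 1),
          (starRingEnd ℂ) (G (f (a * x, 0)) (f (a * x, 1)))
            * G (f (a * x, 0)) (f (a * x, 1))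
            * chiC (tr1 (m - 1) ((lam + lam) * x)) = 1 := by
        intro x
        rw [conj_G_mul_G, CharTwo.add_self_eq_zero, zero_mul, tr1_zero, chiC_zero, one_mul]
      rw [Finset.sum_congr rfl (fun x _ => hterm x), Finset.sum_const, Finset.card_univ,
        card_Fq (m - 1) hn0, nsmul_eq_mul, mul_one]
      push_cast
      rw [div_self (by positivity)]
    · rw [if_neg h]
      have hc : lam + lam' ≠ 0 := by
        intro hcc
        exact h (by rw [CharTwo.add_eq_iff_eq_add] at hcc; rw [hcc, zero_add])
      have hterm : ∀ x : Fq (m - 1),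
          (starRingEnd ℂ) (G (f (a * x, 0)) (f (a * x, 1)))
            * G (f (a * x, 0)) (f (a * x, 1))
            * chiC (tr1 (m - 1) ((lam + lam') * x))
          = chiC (tr1 (m - 1) ((lam + lam') * x)) := by
        intro x
        rw [conj_G_mul_G, one_mul]
      rw [Finset.sum_congr rfl (fun x _ => hterm x), sum_chiC_eq_zero (m - 1) _ hc, zero_div]
  refine ⟨?_, ?_, ?_⟩
  · -- orthonormal bases
    intro a
    have hon : Orthonormal ℂ (mubVec m f a) := by
      rw [orthonormal_iff_ite]
      intro i j
      rw [hsame a i j]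
    have hcard : Fintype.card (Fq (m - 1))
        = Module.finrank ℂ (EuclideanSpace ℂ (Fq (m - 1))) := by
      rw [finrank_euclideanSpace]
    have hsp : ⊤ ≤ Submodule.span ℂ (Set.range (mubVec m f a)) :=
      (hon.linearIndependent.span_eq_top_of_card_eq_finrank hcard).ge
    exact ⟨OrthonormalBasis.mk hon hsp, fun lam => by
      rw [OrthonormalBasis.coe_mk]⟩
  · -- mutual unbiasedness between families
    intro a a' hne lam lam'
    set c := lam + lam' with hc
    set A : ZMod 2 → ZMod 2 → ℤ :=
      fun j k => ∑ x : Fq (m - 1), chi (f (a * x, j) + f (a' * x, k) + tr1 (m - 1) (c * x))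
      with hA
    have e0 : walsh (m - 1) (fun x => f (a * x.1, x.2) + f (a' * x.1, x.2 + 0)) c 0
        = A 0 0 + A 1 1 := by
      rw [walsh_split, hA]
      congr 1 <;> (try (apply Finset.sum_congr rfl; intro x _; norm_num))
    have e1 : walsh (m - 1) (fun x => f (a * x.1, x.2) + f (a' * x.1, x.2 + 1)) c 1
        = A 0 1 - A 1 0 := by
      rw [walsh_split, hA]
      have hx1 : ∀ x : Fq (m - 1),
          chi (f (a * x, 1) + f (a' * x, 1 + 1) + tr1 (m - 1) (c * x) + 1)
            = - chi (f (a * x, 1) + f (a' * x, 0) + tr1 (m - 1) (c * x)) := by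
        intro x
        rw [zmod2_11, chi_add_one]
      rw [Finset.sum_congr rfl (fun x _ => hx1 x), Finset.sum_neg_distrib]
      rw [sub_eq_add_neg]
      congr 1
    have hw0 := hf a a' hne 0 c 0
    have hw1 := hf a a' hne 1 c 1
    rw [e0] at hw0
    rw [e1] at hw1
    have hmdvd : m / 2 * 2 = m := by
      have := Nat.even_iff.mp hm; omega
    have hu2 : ((A 0 0 + A 1 1 : ℤ) : ℝ)^2 = 2^m := by
      have : (A 0 0 + A 1 1)^2 = 2^m := by
        rcases hw0 with h | h
        · rw [h, ← pow_mul, hmdvd]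
        · rw [h, neg_sq, ← pow_mul, hmdvd]
      exact_mod_cast this
    have hw2 : ((A 0 1 - A 1 0 : ℤ) : ℝ)^2 = 2^m := by
      have : (A 0 1 - A 1 0)^2 = 2^m := by
        rcases hw1 with h | h
        · rw [h, ← pow_mul, hmdvd]
        · rw [h, neg_sq, ← pow_mul, hmdvd]
      exact_mod_cast this
    have hS : ∀ j k : ZMod 2, ((A j k : ℤ) : ℂ)
        = ∑ x : Fq (m - 1), chiC (f (a * x, j) + f (a' * x, k) + tr1 (m - 1) (c * x)) := by
      intro j k
      rw [hA]
      push_cast [chi_cast]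
      rfl
    have hinner : @inner ℂ _ _ (mubVec m f a lam) (mubVec m f a' lam')
        = (((A 0 0 + A 1 1 : ℤ) : ℂ) - Complex.I * ((A 0 1 - A 1 0 : ℤ) : ℂ)) / 2
            / ((2 : ℝ)^(m-1) : ℝ) := by
      rw [inner_mubVec]
      congr 1
      rw [Finset.sum_congr rfl (fun x _ =>
        key_pointwise (f (a * x, 0)) (f (a * x, 1)) (f (a' * x, 0)) (f (a' * x, 1))
          (tr1 (m - 1) (c * x)))]
      rw [Finset.sum_add_distrib, ← Finset.mul_sum, ← Finset.mul_sum,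
        Finset.sum_add_distrib, Finset.sum_sub_distrib]
      rw [← hS 0 0, ← hS 1 1, ← hS 1 0, ← hS 0 1]
      push_cast
      ring
    rw [hinner]
    exact abs_helper m hm1 _ _ hu2 hw2
  · -- unbiased with the standard basis
    intro a lam y
    rw [EuclideanSpace.inner_single_left, map_one, one_mul, mubVec_apply]
    exact abs_coord m _ _ _
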